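/- Let r > 0, let κ : ℝ → ℝ satisfy the regularity condition, and let c > 0. Then 4·H(s,t)² − 2·K(s,t) = c² for all s, t ∈ ℝ if and only if κ is identically zero and r = 1/c. In other words, the only regular Euclidean tubular surfaces whose second fundamental form has constant length c are the right cylinders of radius 1/c. -/

import Mathlib

theorem stmt_11 (r : ℝ) (hr : 0 < r) (κ : ℝ → ℝ)
    (hreg : ∀ s t : ℝ, 1 - r * κ s * Real.cos t ≠ 0) (c : ℝ) (hc : 0 < c) :
    (∀ s t : ℝ,
        4 * ((2 * r * κ s * Real.cos t - 1) / (2 * r * (r * κ s * Real.cos t - 1))) ^ 2 -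
          2 * (κ s * Real.cos t / (r * (r * κ s * Real.cos t - 1))) = c ^ 2) ↔
      ((∀ s, κ s = 0) ∧ r = 1 / c) := by
  constructor
  · intro h
    have hκ : ∀ s, κ s = 0 := by
      intro s
      have h0 := h s 0
      have hp := h s Real.pi
      have hr0 := hreg s 0
      have hrp := hreg s Real.pi
      rw [Real.cos_zero] at h0 hr0
      rw [Real.cos_pi] at hp hrp
      set k := κ s with hk
      have hrne : r ≠ 0 := ne_of_gt hr
      have hd0 : r * k - 1 ≠ 0 := by intro hh; apply hr0; linarith
      have hdp : r * k + 1 ≠ 0 := by intro hh; apply hrp; nlinarith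
      have hdp' : -(r * k) - 1 ≠ 0 := by intro hh; apply hdp; linarith
      field_simp [hdp'] at h0 hp
      have e0 : 2*(r*k)^2 - 2*(r*k) + 1 = c^2*r^2*(r*k-1)^2 := by
        have hcan : (4*r*(r*k-1)) ≠ 0 := by
          simp [hrne, hd0]
        apply mul_left_cancel₀ hcan
        linear_combination (r*(r*k-1)) * h0
      have ep : 2*(r*k)^2 + 2*(r*k) + 1 = c^2*r^2*(r*k+1)^2 := by
        have hcan : (-4*r*(r*k+1)) ≠ 0 := by
          simp [hrne, hdp]
        apply mul_left_cancel₀ hcan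
        linear_combination (-(r*(r*k+1))) * hp
      have hcube : 4*(r*k)^3 = 0 := by
        linear_combination (r*k+1)^2 * e0 - (r*k-1)^2 * ep
      have : r * k = 0 := by
        have := pow_eq_zero_iff (n := 3) (by norm_num) |>.mp (by linarith : (r*k)^3 = 0)
        exact this
      rcases mul_eq_zero.mp this with h' | h'
      · exact absurd h' hrne
      · exact h'
    refine ⟨hκ, ?_⟩
    have h0 := h 0 0
    rw [hκ 0, Real.cos_zero] at h0
    have hrne : r ≠ 0 := ne_of_gt hr
    have : (1 / r) ^ 2 = c ^ 2 := by
      field_simp at h0 ⊢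
      nlinarith [h0]
    have h1 : 1 / r = c := by
      nlinarith [sq_nonneg (1/r - c), sq_nonneg (1/r + c), one_div_pos.mpr hr]
    field_simp at h1 ⊢
    linarith [h1]
  · rintro ⟨hκ, hrc⟩ s t
    rw [hκ s, hrc]
    have hcne : c ≠ 0 := ne_of_gt hc
    field_simp
    rw [div_eq_iff (pow_ne_zero 2 (by simp [hcne]))]
    ring
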